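/- (Gross–Oliveira–Kohn variational principle) Let H be a Hermitian operator on a D-dimensional Hilbert space with increasingly ordered eigenvalues E_1 ≤ … ≤ E_D, and let w ∈ ℝ^D have decreasingly ordered nonnegative entries summing to 1. Then Σ_j w_j E_j = min over density operators Γ with spectrum equal to w (sorted) of Tr(Γ H), and the minimum is attained by Γ = Σ_j w_j |Ψ_j⟩⟨Ψ_j| where Ψ_j are orthonormal eigenvectors of H with eigenvalues E_j. -/

import Mathlib

open scoped ComplexOrder

/-- The vector `v` with entries sorted in decreasing order. -/
noncomputable def sortDesc {d : ℕ} (v : Fin d → ℝ) : Fin d → ℝ :=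
  fun i => v (Tuple.sort (fun j => -v j) i)

/-- Sum of the `k` largest entries of `v`. -/
noncomputable def psum {d : ℕ} (v : Fin d → ℝ) (k : ℕ) : ℝ :=
  ∑ i ∈ Finset.univ.filter (fun i : Fin d => (i : ℕ) < k), sortDesc v i

/-- `v ≺ w` : `v` is majorized by `w`. -/
def Majorizes {d : ℕ} (v w : Fin d → ℝ) : Prop :=
  (∀ k : ℕ, k ≤ d → psum v k ≤ psum w k) ∧ ∑ i, v i = ∑ i, w i

section GOKAux

open Polynomial Matrix

variable {n : Type*} [Fintype n] [DecidableEq n]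

lemma charpoly_conj_aux {U A V : Matrix n n ℂ} (hUV : U * V = 1) (hVU : V * U = 1) :
    (U * A * V).charpoly = A.charpoly := by
  have hU' : U.map C * V.map C = 1 := by rw [← Matrix.map_mul, hUV]; simp
  have hV' : V.map C * U.map C = 1 := by rw [← Matrix.map_mul, hVU]; simp
  have hcm : charmatrix (U * A * V) = U.map C * charmatrix A * V.map C := by
    unfold charmatrix
    rw [mul_sub, sub_mul]
    congr 1
    · rw [mul_assoc, (Matrix.scalar_commute (X : ℂ[X]) (Commute.all X) (V.map C)).eq,
        ← mul_assoc, hU', one_mul]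
    · simp only [RingHom.mapMatrix_apply]
      rw [Matrix.map_mul, Matrix.map_mul]
  rw [Matrix.charpoly, hcm, det_mul, det_mul, mul_comm, ← mul_assoc, ← det_mul, hV',
    det_one, one_mul, Matrix.charpoly]

lemma charpoly_diagonal_eq (d : n → ℂ) :
    (diagonal d).charpoly = ∏ i, (X - C (d i)) := by
  rw [Matrix.charpoly]
  have : charmatrix (diagonal d) = diagonal (fun i => X - C (d i)) := by
    unfold charmatrix
    simp only [RingHom.mapMatrix_apply]
    rw [Matrix.diagonal_map (by simp)]
    ext i j
    rcases eq_or_ne i j with rfl | h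
    · simp
    · simp [h, Matrix.diagonal_apply_ne _ h]
  rw [this, det_diagonal]

lemma roots_eq_of_prod {D : ℕ} {v u : Fin D → ℝ}
    (h : ∏ i, (X - C ((v i : ℂ))) = ∏ i, (X - C ((u i : ℂ)))) :
    Finset.univ.val.map v = Finset.univ.val.map u := by
  have key : ∀ f : Fin D → ℝ, (∏ i, (X - C ((f i : ℂ)))).roots
      = Finset.univ.val.map (fun i => ((f i : ℝ) : ℂ)) := by
    intro f
    rw [Finset.prod_eq_multiset_prod]
    have : (Multiset.map (fun i => X - C ((f i : ℂ))) Finset.univ.val)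
        = Multiset.map (fun a => X - C a)
          (Finset.univ.val.map fun i => ((f i : ℝ) : ℂ)) := by
      rw [Multiset.map_map]; rfl
    rw [this, Polynomial.roots_multiset_prod_X_sub_C]
  have := congrArg Polynomial.roots h
  rw [key, key] at this
  have h2 : Multiset.map (fun x : ℝ => (x : ℂ)) (Finset.univ.val.map v)
      = Multiset.map (fun x : ℝ => (x : ℂ)) (Finset.univ.val.map u) := by
    rw [Multiset.map_map, Multiset.map_map]; exact this
  exact Multiset.map_injective Complex.ofReal_injective h2

lemma sortDesc_antitone {d : ℕ} (v : Fin d → ℝ) : Antitone (sortDesc v) := by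
  have h := Tuple.monotone_sort (fun j => -v j)
  intro i j hij
  have := h hij
  simp only [Function.comp_apply] at this
  simpa [sortDesc] using neg_le_neg_iff.mp this

lemma sortDesc_multiset {d : ℕ} (v : Fin d → ℝ) :
    Finset.univ.val.map (sortDesc v) = Finset.univ.val.map v := by
  have : sortDesc v = v ∘ ⇑(Tuple.sort (fun j => -v j)) := rfl
  rw [this, ← Multiset.map_map v, ← Equiv.coe_toEmbedding, ← Finset.map_val,
    Finset.map_univ_equiv]

lemma antitone_unique {d : ℕ} {v u : Fin d → ℝ}
    (hm : Finset.univ.val.map v = Finset.univ.val.map u)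
    (hv : Antitone v) (hu : Antitone u) : v = u := by
  have hperm : (List.ofFn v).Perm (List.ofFn u) := by
    rw [← Multiset.coe_eq_coe, ← Fin.univ_val_map, ← Fin.univ_val_map]; exact hm
  have hsv : (List.ofFn v).Pairwise (fun a b : ℝ => b ≤ a) := by
    rw [List.pairwise_ofFn]; intro i j hij; exact hv hij.le
  have hsu : (List.ofFn u).Pairwise (fun a b : ℝ => b ≤ a) := by
    rw [List.pairwise_ofFn]; intro i j hij; exact hu hij.le
  have : List.ofFn v = List.ofFn u := List.Perm.eq_of_pairwise (fun a b _ _ h1 h2 => le_antisymm h2 h1) hsv hsu hperm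
  exact List.ofFn_injective this

lemma spec_sortDesc {D : ℕ} {Γ : Matrix (Fin D) (Fin D) ℂ} (hΓ : Γ.IsHermitian)
    {P : Matrix (Fin D) (Fin D) ℂ} (hP : Pᴴ * P = 1)
    {v : Fin D → ℝ} (hv : Antitone v)
    (hΓP : Γ = P * (diagonal (fun i => (v i : ℂ))) * Pᴴ) :
    sortDesc hΓ.eigenvalues = v := by
  have hP' : P * Pᴴ = 1 := mul_eq_one_comm.mp hP
  set U : Matrix (Fin D) (Fin D) ℂ := (hΓ.eigenvectorUnitary : Matrix (Fin D) (Fin D) ℂ)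
  have hU1 : Uᴴ * U = 1 := by
    have := hΓ.eigenvectorUnitary.prop.1
    rwa [Matrix.star_eq_conjTranspose] at this
  have hU2 : U * Uᴴ = 1 := by
    have := hΓ.eigenvectorUnitary.prop.2
    rwa [Matrix.star_eq_conjTranspose] at this
  have hspec : Γ = U * (diagonal (fun i => ((hΓ.eigenvalues i : ℝ) : ℂ))) * Uᴴ := by
    convert hΓ.spectral_theorem using 1
    rw [Unitary.conjStarAlgAut_apply]; rfl
  have h1 : (diagonal (fun i => (v i : ℂ))).charpoly
      = (diagonal (fun i => ((hΓ.eigenvalues i : ℝ) : ℂ))).charpoly := by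
    have e1 : Γ.charpoly = (diagonal (fun i => (v i : ℂ))).charpoly := by
      rw [hΓP]; exact charpoly_conj_aux hP' hP
    have e2 : Γ.charpoly
        = (diagonal (fun i => ((hΓ.eigenvalues i : ℝ) : ℂ))).charpoly := by
      conv_lhs => rw [hspec]
      exact charpoly_conj_aux hU2 hU1
    rw [← e1, e2]
  rw [charpoly_diagonal_eq, charpoly_diagonal_eq] at h1
  have hmult := roots_eq_of_prod h1.symm
  exact antitone_unique ((sortDesc_multiset _).trans hmult) (sortDesc_antitone _) hv

lemma ds_ineq {D : ℕ} {T : Matrix (Fin D) (Fin D) ℝ} (hT : T ∈ doublyStochastic ℝ (Fin D))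
    {w E : Fin D → ℝ} (hw : Antitone w) (hE : Monotone E) :
    ∑ i, w i * E i ≤ ∑ i, ∑ j, w i * T i j * E j := by
  obtain ⟨c, hc0, hcsum, hcT⟩ := exists_eq_sum_perm_of_mem_doublyStochastic hT
  have hAnti : Antivary w E := by
    intro i j hij
    exact hw (le_of_not_gt fun h => absurd (hE h.le) (not_le.mpr hij))
  have hTij : ∀ i j, T i j
      = ∑ σ : Equiv.Perm (Fin D), c σ * (if σ i = j then 1 else 0) := by
    intro i j
    rw [← hcT]
    simp [Matrix.sum_apply, Equiv.Perm.permMatrix, PEquiv.toMatrix_apply,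
      Equiv.toPEquiv_apply, Option.mem_def]
  calc ∑ i, w i * E i = ∑ σ : Equiv.Perm (Fin D), c σ * ∑ i, w i * E i := by
        rw [← Finset.sum_mul, hcsum, one_mul]
    _ ≤ ∑ σ : Equiv.Perm (Fin D), c σ * ∑ i, w i * E (σ i) :=
        Finset.sum_le_sum fun σ _ => mul_le_mul_of_nonneg_left
          (hAnti.sum_mul_le_sum_mul_comp_perm) (hc0 σ)
    _ = ∑ i, ∑ j, w i * T i j * E j := by
        simp_rw [hTij]
        have key : ∀ (σ : Equiv.Perm (Fin D)) (x : Fin D),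
            ∑ x1, (w x * (c σ * if σ x = x1 then 1 else 0)) * E x1
              = c σ * (w x * E (σ x)) := by
          intro σ x
          rw [Finset.sum_eq_single (σ x)]
          · simp; ring
          · intro b _ hb
            rw [if_neg (fun h => hb h.symm)]; ring
          · simp
        refine Eq.symm ?_
        calc ∑ x : Fin D, ∑ x1 : Fin D,
              (w x * ∑ σ : Equiv.Perm (Fin D), c σ * if σ x = x1 then 1 else 0) * E x1
            = ∑ x : Fin D, ∑ x1 : Fin D, ∑ σ : Equiv.Perm (Fin D),
              (w x * (c σ * if σ x = x1 then 1 else 0)) * E x1 := by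
              simp_rw [Finset.mul_sum, Finset.sum_mul]
          _ = ∑ x : Fin D, ∑ σ : Equiv.Perm (Fin D), ∑ x1 : Fin D,
              (w x * (c σ * if σ x = x1 then 1 else 0)) * E x1 := by
              refine Finset.sum_congr rfl fun x _ => Finset.sum_comm
          _ = ∑ σ : Equiv.Perm (Fin D), ∑ x : Fin D, ∑ x1 : Fin D,
              (w x * (c σ * if σ x = x1 then 1 else 0)) * E x1 := Finset.sum_comm
          _ = ∑ σ : Equiv.Perm (Fin D), ∑ x : Fin D, c σ * (w x * E (σ x)) := by
              exact Finset.sum_congr rfl fun σ _ => Finset.sum_congr rfl fun x _ => key σ x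
          _ = ∑ σ : Equiv.Perm (Fin D), c σ * ∑ i, w i * E (σ i) := by
              simp_rw [Finset.mul_sum]

end GOKAux

open Polynomial Matrix

/-- Gross–Oliveira–Kohn variational principle: for Hermitian `H` with increasingly
ordered eigenvalues `E` and decreasingly ordered weights `w` summing to 1,
`∑ j, w j * E j` is the minimum of `Tr(Γ H)` over density operators `Γ` with
(sorted) spectrum `w`, attained by `Γ = ∑ j, w j • |Ψ j⟩⟨Ψ j|` with `Ψ j`
orthonormal eigenvectors of `H`. -/
theorem gross_oliveira_kohn {D : ℕ} (H : Matrix (Fin D) (Fin D) ℂ)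
    (hH : H.IsHermitian)
    (E : Fin D → ℝ) (hEmono : Monotone E)
    (hEeig : ∃ σ : Equiv.Perm (Fin D), E = hH.eigenvalues ∘ σ)
    (w : Fin D → ℝ) (hwmono : Antitone w) (hwpos : ∀ j, 0 ≤ w j)
    (hwsum : ∑ j, w j = 1)
    (Ψ : Fin D → (Fin D → ℂ))
    (hortho : ∀ i j, dotProduct (star (Ψ i)) (Ψ j) = if i = j then (1 : ℂ) else 0)
    (heig : ∀ j, H.mulVec (Ψ j) = (E j : ℂ) • Ψ j) :
    IsLeast {x : ℝ | ∃ Γ : Matrix (Fin D) (Fin D) ℂ, ∃ hΓ : Γ.PosSemidef,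
        Γ.trace = 1 ∧ sortDesc hΓ.1.eigenvalues = w ∧ (Γ * H).trace = (x : ℂ)}
      (∑ j, w j * E j) ∧
    ((∑ j, (w j : ℂ) • Matrix.vecMulVec (Ψ j) (star (Ψ j))) * H).trace
      = ((∑ j, w j * E j : ℝ) : ℂ) := by
  -- the matrix with columns `Ψ j`
  set P : Matrix (Fin D) (Fin D) ℂ := Matrix.of fun i j => Ψ j i with hPdef
  have hP : Pᴴ * P = 1 := by
    ext i j
    have h := hortho i j
    simp only [dotProduct, Pi.star_apply] at h
    simp only [Matrix.mul_apply, Matrix.conjTranspose_apply, Matrix.one_apply, Matrix.of_apply,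
      Matrix.star_apply, hPdef]
    rw [← h]
  have hP' : P * Pᴴ = 1 := mul_eq_one_comm.mp hP
  have hHP : H * P = P * diagonal (fun j => (E j : ℂ)) := by
    ext i j
    rw [Matrix.mul_apply, Matrix.mul_diagonal]
    have h1 : ∑ k, H i k * P k j = H.mulVec (Ψ j) i := rfl
    rw [h1, heig j]
    simp [hPdef, mul_comm]
  have hH' : H = P * diagonal (fun j => (E j : ℂ)) * Pᴴ := by
    calc H = H * (P * Pᴴ) := by rw [hP', Matrix.mul_one]
      _ = (H * P) * Pᴴ := by rw [Matrix.mul_assoc]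
      _ = P * diagonal (fun j => (E j : ℂ)) * Pᴴ := by rw [hHP]
  set Γ₀ : Matrix (Fin D) (Fin D) ℂ :=
    ∑ j, (w j : ℂ) • Matrix.vecMulVec (Ψ j) (star (Ψ j)) with hΓ₀def
  have hΓ₀ : Γ₀ = P * diagonal (fun j => (w j : ℂ)) * Pᴴ := by
    ext i k
    simp only [hΓ₀def, Matrix.sum_apply, Matrix.smul_apply, Matrix.vecMulVec_apply,
      smul_eq_mul]
    rw [Matrix.mul_apply]
    simp only [Matrix.mul_diagonal, Matrix.conjTranspose_apply, Matrix.of_apply,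
      Pi.star_apply, hPdef]
    exact Finset.sum_congr rfl fun j _ => by ring
  have htraceconj : ∀ X : Matrix (Fin D) (Fin D) ℂ, (P * X * Pᴴ).trace = X.trace := by
    intro X
    rw [trace_mul_cycle, hP, Matrix.one_mul]
  have htrΓ₀H : (Γ₀ * H).trace = ((∑ j, w j * E j : ℝ) : ℂ) := by
    have hprod : Γ₀ * H = P * (diagonal (fun j => (w j : ℂ) * (E j : ℂ))) * Pᴴ := by
      rw [hΓ₀]
      conv_lhs => rw [hH']
      rw [← Matrix.diagonal_mul_diagonal]
      simp only [Matrix.mul_assoc]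
      rw [← Matrix.mul_assoc Pᴴ P, hP, Matrix.one_mul]
    rw [hprod, htraceconj, Matrix.trace_diagonal]
    push_cast
    rfl
  have hpsd : Γ₀.PosSemidef := by
    rw [hΓ₀]
    refine Matrix.PosSemidef.mul_mul_conjTranspose_same ?_ P
    refine posSemidef_diagonal_iff.mpr fun i => ?_
    exact_mod_cast hwpos i
  have htrΓ₀ : Γ₀.trace = 1 := by
    rw [hΓ₀, htraceconj, Matrix.trace_diagonal]
    rw [← Complex.ofReal_sum]
    exact_mod_cast congrArg (fun r : ℝ => (r : ℂ)) hwsum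
  have hsort : sortDesc hpsd.1.eigenvalues = w := spec_sortDesc hpsd.1 hP hwmono hΓ₀
  refine ⟨⟨⟨Γ₀, hpsd, htrΓ₀, hsort, htrΓ₀H⟩, ?_⟩, htrΓ₀H⟩
  -- lower bound
  rintro x ⟨Γ, hΓ, htr1, hsort1, htrx⟩
  set lam : Fin D → ℝ := hΓ.1.eigenvalues with hlam
  set U : Matrix (Fin D) (Fin D) ℂ := (hΓ.1.eigenvectorUnitary : Matrix (Fin D) (Fin D) ℂ)
    with hUdef
  have hU1 : Uᴴ * U = 1 := by
    have := hΓ.1.eigenvectorUnitary.prop.1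
    rwa [Matrix.star_eq_conjTranspose] at this
  have hU2 : U * Uᴴ = 1 := by
    have := hΓ.1.eigenvectorUnitary.prop.2
    rwa [Matrix.star_eq_conjTranspose] at this
  have hspec : Γ = U * (diagonal (fun i => ((lam i : ℝ) : ℂ))) * Uᴴ := by
    convert hΓ.1.spectral_theorem using 1
    rw [Unitary.conjStarAlgAut_apply]; rfl
  set M : Matrix (Fin D) (Fin D) ℂ := Uᴴ * P with hMdef
  have hMH : Mᴴ = Pᴴ * U := by
    rw [hMdef, Matrix.conjTranspose_mul, Matrix.conjTranspose_conjTranspose]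
  have hM1 : M * Mᴴ = 1 := by
    rw [hMdef, hMH, Matrix.mul_assoc, ← Matrix.mul_assoc P, hP', Matrix.one_mul, hU1]
  have hM2 : Mᴴ * M = 1 := mul_eq_one_comm.mp hM1
  set s : Fin D → Fin D → ℝ := fun i j => Complex.normSq (M i j) with hsdef
  have hrow : ∀ i, ∑ j, s i j = 1 := by
    intro i
    have h1 : (M * Mᴴ) i i = 1 := by rw [hM1, Matrix.one_apply_eq]
    rw [Matrix.mul_apply] at h1
    have h2 : ∑ j, M i j * Mᴴ j i = ((∑ j, s i j : ℝ) : ℂ) := by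
      rw [Complex.ofReal_sum]
      refine Finset.sum_congr rfl fun j _ => ?_
      rw [Matrix.conjTranspose_apply, Complex.star_def, Complex.mul_conj]
    rw [h2] at h1
    exact_mod_cast h1
  have hcol : ∀ j, ∑ i, s i j = 1 := by
    intro j
    have h1 : (Mᴴ * M) j j = 1 := by rw [hM2, Matrix.one_apply_eq]
    rw [Matrix.mul_apply] at h1
    have h2 : ∑ i, Mᴴ j i * M i j = ((∑ i, s i j : ℝ) : ℂ) := by
      rw [Complex.ofReal_sum]
      refine Finset.sum_congr rfl fun i _ => ?_
      rw [Matrix.conjTranspose_apply, Complex.star_def, mul_comm, Complex.mul_conj]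
    rw [h2] at h1
    exact_mod_cast h1
  -- trace formula
  have htrace : (Γ * H).trace
      = ((∑ i, ∑ j, lam i * E j * s i j : ℝ) : ℂ) := by
    have e : Γ * H = U * ((diagonal (fun i => ((lam i : ℝ) : ℂ)))
        * (M * ((diagonal (fun j => (E j : ℂ))) * Mᴴ))) * Uᴴ := by
      conv_lhs => rw [hspec, hH']
      rw [hMdef, hMH]
      simp only [Matrix.mul_assoc]
      rw [hU2, Matrix.mul_one]
    have htrU : ∀ X : Matrix (Fin D) (Fin D) ℂ, (U * X * Uᴴ).trace = X.trace := by
      intro X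
      rw [trace_mul_cycle, hU1, Matrix.one_mul]
    rw [e, htrU, Complex.ofReal_sum, Matrix.trace]
    refine Finset.sum_congr rfl fun i _ => ?_
    rw [Matrix.diag_apply, Matrix.diagonal_mul, Matrix.mul_apply, Finset.mul_sum,
      Complex.ofReal_sum]
    refine Finset.sum_congr rfl fun j _ => ?_
    rw [Matrix.diagonal_mul, Matrix.conjTranspose_apply, Complex.star_def]
    rw [show ((lam i * E j * s i j : ℝ) : ℂ)
        = (lam i : ℂ) * (E j : ℂ) * ((Complex.normSq (M i j) : ℝ) : ℂ) by push_cast; ring,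
      ← Complex.mul_conj]
    ring
  have hx : x = ∑ i, ∑ j, lam i * E j * s i j := by
    have h := htrx.symm.trans htrace
    exact_mod_cast h
  set τ : Equiv.Perm (Fin D) := Tuple.sort (fun j => -(lam j)) with hτdef
  have hlw : ∀ i, lam (τ i) = w i := fun i => congrFun hsort1 i
  set T : Matrix (Fin D) (Fin D) ℝ := Matrix.of fun i j => s (τ i) j with hTdef
  have hT : T ∈ doublyStochastic ℝ (Fin D) := by
    refine mem_doublyStochastic_iff_sum.mpr ⟨fun i j => Complex.normSq_nonneg _, ?_, ?_⟩
    · intro i; exact hrow (τ i)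
    · intro j
      have := Equiv.sum_comp τ (fun i => s i j)
      simp only [hTdef, Matrix.of_apply]
      rw [this]
      exact hcol j
  have hx2 : x = ∑ i, ∑ j, w i * T i j * E j := by
    rw [hx, ← Equiv.sum_comp τ (fun i => ∑ j, lam i * E j * s i j)]
    refine Finset.sum_congr rfl fun i _ => ?_
    refine Finset.sum_congr rfl fun j _ => ?_
    simp only [hlw i, hTdef, Matrix.of_apply]
    ring
  rw [hx2]
  exact ds_ineq hT hwmono hEmono
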